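/- Let I be a proper monomial ideal of S with minimal monomial generating set G_min(I). Then a prime ideal of S is minimal over I if and only if it equals P_B for some B ⊆ {1,…,n} that is a minimal nonface of the eliminating simplicial complex of I; that is, Min(I) = {P_B : B ⊆ {1,…,n}, the ideal generated by {u(B) : u ∈ G_min(I)} is proper, and for every proper subset A ⊊ B the ideal generated by {u(A) : u ∈ G_min(I)} equals S}. -/

import Mathlib

open MvPolynomial

/-- An ideal of `K[x_1, …, x_n]` is a monomial ideal if it is generated by monomials. -/
def IsMonomialIdeal {K : Type*} [Field K] {n : ℕ} (I : Ideal (MvPolynomial (Fin n) K)) : Prop :=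
  ∃ G : Set (Fin n →₀ ℕ),
    I = Ideal.span ((fun a => (monomial a (1 : K) : MvPolynomial (Fin n) K)) '' G)

/-- `G_min(I)`: the exponent vectors of the minimal monomial generators of `I`, i.e. the
monomials `u ∈ I` such that `u / x_j ∉ I` for every variable `x_j` dividing `u`. -/
def minGens {K : Type*} [Field K] {n : ℕ} (I : Ideal (MvPolynomial (Fin n) K)) :
    Set (Fin n →₀ ℕ) :=
  {a | (monomial a (1 : K) : MvPolynomial (Fin n) K) ∈ I ∧
    ∀ j : Fin n, a j ≠ 0 →
      (monomial (a - Finsupp.single j 1) (1 : K) : MvPolynomial (Fin n) K) ∉ I}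

/-- The restriction `u(B)` of an exponent vector: `u(B) = ∏_{j ∈ B} x_j ^ (a j)`. -/
def restrictExp {n : ℕ} (B : Finset (Fin n)) (a : Fin n →₀ ℕ) : Fin n →₀ ℕ :=
  Finsupp.filter (· ∈ B) a

/-- The ideal generated by `{u(A) : u ∈ G_min(I)}`; the eliminating simplicial complex
of `I` consists of the `A ⊆ [n]` for which this ideal is all of `S`. -/
noncomputable def elimIdeal {K : Type*} [Field K] {n : ℕ} (I : Ideal (MvPolynomial (Fin n) K))
    (A : Finset (Fin n)) : Ideal (MvPolynomial (Fin n) K) :=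
  Ideal.span ((fun a => (monomial (restrictExp A a) (1 : K) : MvPolynomial (Fin n) K)) ''
    minGens I)

/-- The monomial prime ideal `P_B = ⟨x_i : i ∈ B⟩`. -/
noncomputable def monomialPrime (K : Type*) [Field K] {n : ℕ} (B : Finset (Fin n)) :
    Ideal (MvPolynomial (Fin n) K) :=
  Ideal.span ((fun i => (X i : MvPolynomial (Fin n) K)) '' ↑B)

section Aux

variable {K : Type*} [Field K] {n : ℕ}

/-- The algebra map killing the variables in `B`. -/
noncomputable def killMap (K : Type*) [Field K] {n : ℕ} (B : Finset (Fin n)) :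
    MvPolynomial (Fin n) K →ₐ[K] MvPolynomial (Fin n) K :=
  aeval (fun i => if i ∈ B then 0 else X i)

lemma killMap_monomial (B : Finset (Fin n)) (a : Fin n →₀ ℕ) (c : K) :
    killMap K B (monomial a c) =
      if ∀ i ∈ B, a i = 0 then monomial a c else 0 := by
  rw [killMap, aeval_monomial]
  split_ifs with h
  · rw [monomial_eq, algebraMap_eq]
    congr 1
    apply Finsupp.prod_congr
    intro i hi
    rw [if_neg]
    intro hiB
    exact (Finsupp.mem_support_iff.mp hi) (h i hiB)
  · push_neg at h
    obtain ⟨i, hiB, hia⟩ := h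
    rw [Finsupp.prod, Finset.prod_eq_zero (Finsupp.mem_support_iff.mpr hia), mul_zero]
    rw [if_pos hiB, zero_pow hia]

lemma sub_killMap_mem (B : Finset (Fin n)) (f : MvPolynomial (Fin n) K) :
    f - killMap K B f ∈ monomialPrime K B := by
  induction f using MvPolynomial.induction_on' with
  | monomial a c =>
    rw [killMap_monomial]
    split_ifs with h
    · rw [sub_self]; exact (monomialPrime K B).zero_mem
    · push_neg at h
      obtain ⟨i, hiB, hia⟩ := h
      rw [sub_zero]
      have hab : (a - Finsupp.single i 1) + Finsupp.single i 1 = a := by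
        ext j
        rcases eq_or_ne i j with rfl | hij
        · simp only [Finsupp.add_apply, Finsupp.tsub_apply, Finsupp.single_eq_same]
          omega
        · simp [Finsupp.single_eq_of_ne' hij]
      have key : (monomial a c : MvPolynomial (Fin n) K)
          = monomial (a - Finsupp.single i 1) c * X i := by
        conv_lhs => rw [← hab]
        rw [monomial_add_single, pow_one]
      rw [key]
      exact Ideal.mul_mem_left _ _ (Ideal.subset_span ⟨i, hiB, rfl⟩)
  | add p q hp hq =>
    have key : p + q - killMap K B (p + q)
        = (p - killMap K B p) + (q - killMap K B q) := by
      rw [map_add]; ring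
    rw [key]; exact Ideal.add_mem _ hp hq

lemma monomialPrime_eq_ker (B : Finset (Fin n)) :
    monomialPrime K B = RingHom.ker (killMap K B).toRingHom := by
  apply le_antisymm
  · rw [monomialPrime, Ideal.span_le]
    rintro _ ⟨i, hi, rfl⟩
    rw [SetLike.mem_coe, RingHom.mem_ker]
    show killMap K B (X i) = 0
    rw [killMap, aeval_X, if_pos (by exact_mod_cast hi)]
  · intro f hf
    rw [RingHom.mem_ker] at hf
    replace hf : killMap K B f = 0 := hf
    have h2 := sub_killMap_mem B f
    rwa [hf, sub_zero] at h2

lemma monomialPrime_isPrime (B : Finset (Fin n)) : (monomialPrime K B).IsPrime := by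
  rw [monomialPrime_eq_ker]
  exact RingHom.ker_isPrime _

lemma monomial_mem_monomialPrime {B : Finset (Fin n)} {a : Fin n →₀ ℕ} :
    (monomial a (1 : K) : MvPolynomial (Fin n) K) ∈ monomialPrime K B
      ↔ ∃ i ∈ B, a i ≠ 0 := by
  rw [monomialPrime_eq_ker, RingHom.mem_ker,
    show (killMap K B).toRingHom ((monomial a) (1 : K)) = killMap K B (monomial a 1) from rfl,
    killMap_monomial]
  split_ifs with h
  · constructor
    · intro h0
      exact absurd (by rwa [monomial_eq_zero] at h0) one_ne_zero
    · rintro ⟨i, hi, hne⟩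
      exact absurd (h i hi) hne
  · push_neg at h
    simpa using h

lemma X_mem_monomialPrime {B : Finset (Fin n)} {i : Fin n} :
    (X i : MvPolynomial (Fin n) K) ∈ monomialPrime K B ↔ i ∈ B := by
  rw [show (X i : MvPolynomial (Fin n) K) = monomial (Finsupp.single i 1) 1 by
    rw [← pow_one (X i)]; exact X_pow_eq_monomial, monomial_mem_monomialPrime]
  constructor
  · rintro ⟨j, hj, hne⟩
    rw [Finsupp.single_apply] at hne
    rcases eq_or_ne i j with rfl | hij
    · exact hj
    · simp [hij] at hne
  · intro hi
    exact ⟨i, hi, by simp⟩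

lemma monomialPrime_le_monomialPrime {A B : Finset (Fin n)} :
    monomialPrime K A ≤ monomialPrime K B ↔ A ⊆ B := by
  constructor
  · intro h i hi
    have hX : (X i : MvPolynomial (Fin n) K) ∈ monomialPrime K A :=
      Ideal.subset_span ⟨i, hi, rfl⟩
    exact X_mem_monomialPrime.mp (h hX)
  · intro h
    rw [monomialPrime, Ideal.span_le]
    rintro _ ⟨i, hi, rfl⟩
    exact Ideal.subset_span ⟨i, h (by exact_mod_cast hi), rfl⟩

lemma span_monomial_eq_top_iff {T : Set (Fin n →₀ ℕ)} :
    Ideal.span ((fun a => (monomial a (1 : K) : MvPolynomial (Fin n) K)) '' T) = ⊤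
      ↔ 0 ∈ T := by
  constructor
  · intro h
    by_contra h0
    have hle : Ideal.span ((fun a => (monomial a (1 : K) : MvPolynomial (Fin n) K)) '' T)
        ≤ RingHom.ker (constantCoeff (σ := Fin n) (R := K)) := by
      rw [Ideal.span_le]
      rintro _ ⟨a, ha, rfl⟩
      simp only [SetLike.mem_coe, RingHom.mem_ker, constantCoeff_monomial]
      rw [if_neg]
      rintro rfl
      exact h0 ha
    rw [h] at hle
    have h1 : (1 : MvPolynomial (Fin n) K) ∈ RingHom.ker (constantCoeff (σ := Fin n) (R := K)) :=
      hle trivial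
    simp [RingHom.mem_ker] at h1
  · intro h
    rw [Ideal.eq_top_iff_one]
    exact Ideal.subset_span ⟨0, h, by simp⟩

lemma monomial_mem_of_le {J : Ideal (MvPolynomial (Fin n) K)} {a b : Fin n →₀ ℕ}
    (hle : b ≤ a) (hb : (monomial b (1 : K) : MvPolynomial (Fin n) K) ∈ J) :
    (monomial a (1 : K) : MvPolynomial (Fin n) K) ∈ J := by
  have hab : a - b + b = a := by
    ext j
    have := Finsupp.le_def.mp hle j
    simp only [Finsupp.add_apply, Finsupp.tsub_apply]
    omega
  have key : (monomial a (1 : K) : MvPolynomial (Fin n) K)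
      = monomial (a - b) 1 * monomial b 1 := by
    rw [monomial_mul, one_mul, hab]
  rw [key]
  exact Ideal.mul_mem_left _ _ hb

lemma exists_minGen_le (I : Ideal (MvPolynomial (Fin n) K)) (a : Fin n →₀ ℕ)
    (ha : (monomial a (1 : K) : MvPolynomial (Fin n) K) ∈ I) :
    ∃ b ∈ minGens I, b ≤ a := by
  by_cases h : ∀ j : Fin n, a j ≠ 0 →
      (monomial (a - Finsupp.single j 1) (1 : K) : MvPolynomial (Fin n) K) ∉ I
  · exact ⟨a, ⟨ha, h⟩, le_rfl⟩
  · push_neg at h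
    obtain ⟨j, hj, hmem⟩ := h
    obtain ⟨b, hb, hle⟩ := exists_minGen_le I (a - Finsupp.single j 1) hmem
    exact ⟨b, hb, hle.trans tsub_le_self⟩
termination_by ∑ i, a i
decreasing_by
  refine Finset.sum_lt_sum (fun i _ => ?_) ⟨j, Finset.mem_univ j, ?_⟩
  · simp only [Finsupp.tsub_apply]
    exact Nat.sub_le _ _
  · simp only [Finsupp.tsub_apply, Finsupp.single_eq_same]
    omega

lemma span_minGens {I : Ideal (MvPolynomial (Fin n) K)} (hmon : IsMonomialIdeal I) :
    I = Ideal.span ((fun a => (monomial a (1 : K) : MvPolynomial (Fin n) K)) '' minGens I) := by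
  obtain ⟨G, hG⟩ := hmon
  apply le_antisymm
  · conv_lhs => rw [hG]
    rw [Ideal.span_le]
    rintro _ ⟨a, haG, rfl⟩
    have haI : (monomial a (1 : K) : MvPolynomial (Fin n) K) ∈ I := by
      rw [hG]; exact Ideal.subset_span ⟨a, haG, rfl⟩
    obtain ⟨b, hb, hle⟩ := exists_minGen_le I a haI
    exact monomial_mem_of_le hle (Ideal.subset_span ⟨b, hb, rfl⟩)
  · rw [Ideal.span_le]
    rintro _ ⟨a, ha, rfl⟩
    exact ha.1

lemma restrictExp_eq_zero_iff {B : Finset (Fin n)} {a : Fin n →₀ ℕ} :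
    restrictExp B a = 0 ↔ ∀ i ∈ B, a i = 0 := by
  classical
  constructor
  · intro h i hi
    have h2 := DFunLike.congr_fun h i
    rw [restrictExp, Finsupp.filter_apply] at h2
    simpa [hi] using h2
  · intro h
    ext i
    rw [restrictExp, Finsupp.filter_apply]
    split_ifs with hi
    · exact h i hi
    · rfl

lemma elimIdeal_eq_top_iff {I : Ideal (MvPolynomial (Fin n) K)} {B : Finset (Fin n)} :
    elimIdeal I B = ⊤ ↔ ∃ a ∈ minGens I, ∀ i ∈ B, a i = 0 := by
  rw [elimIdeal,
    show ((fun a => (monomial (restrictExp B a) (1 : K) : MvPolynomial (Fin n) K)) '' minGens I)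
      = (fun a => (monomial a (1 : K) : MvPolynomial (Fin n) K)) '' (restrictExp B '' minGens I)
      from (Set.image_image (fun a => (monomial a (1 : K) : MvPolynomial (Fin n) K))
        (restrictExp B) (minGens I)).symm,
    span_monomial_eq_top_iff]
  constructor
  · rintro ⟨a, ha, h0⟩
    exact ⟨a, ha, restrictExp_eq_zero_iff.mp h0⟩
  · rintro ⟨a, ha, h0⟩
    exact ⟨a, ha, restrictExp_eq_zero_iff.mpr h0⟩

lemma le_monomialPrime_iff {I : Ideal (MvPolynomial (Fin n) K)} (hmon : IsMonomialIdeal I)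
    {B : Finset (Fin n)} : I ≤ monomialPrime K B ↔ elimIdeal I B ≠ ⊤ := by
  rw [Ne, elimIdeal_eq_top_iff]
  push_neg
  constructor
  · intro h a ha
    have h2 : (monomial a (1 : K) : MvPolynomial (Fin n) K) ∈ monomialPrime K B := h ha.1
    rw [monomial_mem_monomialPrime] at h2
    obtain ⟨i, hi, hne⟩ := h2
    exact ⟨i, hi, hne⟩
  · intro h
    conv_lhs => rw [span_minGens hmon]
    rw [Ideal.span_le]
    rintro _ ⟨a, ha, rfl⟩
    rw [SetLike.mem_coe, monomial_mem_monomialPrime]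
    obtain ⟨i, hi, hne⟩ := h a ha
    exact ⟨i, hi, hne⟩

lemma exists_monomialPrime_between {I P : Ideal (MvPolynomial (Fin n) K)}
    (hmon : IsMonomialIdeal I) (hP : P.IsPrime) (hIP : I ≤ P) :
    ∃ C : Finset (Fin n), I ≤ monomialPrime K C ∧ monomialPrime K C ≤ P := by
  classical
  refine ⟨Finset.univ.filter (fun i => X i ∈ P), ?_, ?_⟩
  · conv_lhs => rw [span_minGens hmon]
    rw [Ideal.span_le]
    rintro _ ⟨a, ha, rfl⟩
    rw [SetLike.mem_coe, monomial_mem_monomialPrime]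
    have haP : (monomial a (1 : K) : MvPolynomial (Fin n) K) ∈ P := hIP ha.1
    haveI := hP
    rw [monomial_eq, C_1, one_mul, Finsupp.prod] at haP
    rw [Ideal.IsPrime.prod_mem_iff] at haP
    obtain ⟨i, hi, hXpow⟩ := haP
    have hine : a i ≠ 0 := Finsupp.mem_support_iff.mp hi
    have hX : (X i : MvPolynomial (Fin n) K) ∈ P := hP.mem_of_pow_mem _ hXpow
    exact ⟨i, Finset.mem_filter.mpr ⟨Finset.mem_univ i, hX⟩, hine⟩
  · rw [monomialPrime, Ideal.span_le]
    rintro _ ⟨i, hi, rfl⟩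
    exact (Finset.mem_filter.mp (Finset.mem_coe.mp hi)).2

lemma exists_minimal_nonface (I : Ideal (MvPolynomial (Fin n) K)) (B : Finset (Fin n))
    (hB : I ≤ monomialPrime K B) :
    ∃ B' : Finset (Fin n), B' ⊆ B ∧ I ≤ monomialPrime K B' ∧
      ∀ A, A ⊂ B' → ¬ I ≤ monomialPrime K A := by
  by_cases h : ∀ A, A ⊂ B → ¬ I ≤ monomialPrime K A
  · exact ⟨B, Finset.Subset.refl B, hB, h⟩
  · push_neg at h
    obtain ⟨A, hAB, hA⟩ := h
    obtain ⟨B', h1, h2, h3⟩ := exists_minimal_nonface I A hA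
    exact ⟨B', h1.trans hAB.subset, h2, h3⟩
termination_by B.card
decreasing_by exact Finset.card_lt_card hAB

end Aux

/-- For a proper monomial ideal `I`, the minimal primes of `I` are exactly the ideals
`P_B` where `B` runs over the minimal nonfaces of the eliminating simplicial
complex of `I`. -/
theorem minimalPrimes_eq_minimal_nonfaces {K : Type*} [Field K] {n : ℕ}
    (I : Ideal (MvPolynomial (Fin n) K)) (hmon : IsMonomialIdeal I) (hproper : I ≠ ⊤) :
    I.minimalPrimes =
      {P | ∃ B : Finset (Fin n), P = monomialPrime K B ∧ elimIdeal I B ≠ ⊤ ∧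
        ∀ A : Finset (Fin n), A ⊂ B → elimIdeal I A = ⊤} := by
  ext P
  simp only [Ideal.minimalPrimes, Set.mem_setOf_eq]
  constructor
  · rintro ⟨⟨hPprime, hIP⟩, hmin⟩
    obtain ⟨C, hIC, hCP⟩ := exists_monomialPrime_between hmon hPprime hIP
    obtain ⟨B, hBC, hIB, hBmin⟩ := exists_minimal_nonface I C hIC
    have hBP : monomialPrime K B ≤ P :=
      (monomialPrime_le_monomialPrime.mpr hBC).trans hCP
    have hPB : P ≤ monomialPrime K B := hmin ⟨monomialPrime_isPrime B, hIB⟩ hBP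
    refine ⟨B, le_antisymm hPB hBP, (le_monomialPrime_iff hmon).mp hIB, ?_⟩
    intro A hAB
    by_contra hA
    exact hBmin A hAB ((le_monomialPrime_iff hmon).mpr hA)
  · rintro ⟨B, rfl, hne, hminA⟩
    have hIB : I ≤ monomialPrime K B := (le_monomialPrime_iff hmon).mpr hne
    refine ⟨⟨monomialPrime_isPrime B, hIB⟩, ?_⟩
    rintro Q ⟨hQprime, hIQ⟩ hQle
    obtain ⟨C, hIC, hCQ⟩ := exists_monomialPrime_between hmon hQprime hIQ
    have hCB : C ⊆ B := monomialPrime_le_monomialPrime.mp (hCQ.trans hQle)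
    rcases eq_or_ne C B with rfl | hne'
    · exact hCQ
    · exfalso
      have hCsub : C ⊂ B := ⟨hCB, fun h => hne' (Finset.Subset.antisymm hCB h)⟩
      exact ((le_monomialPrime_iff hmon).mp hIC) (hminA C hCsub)
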